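/- arXiv:1701.04165 — 3 statements merged into one kernel-verified Lean document; each statement's English description precedes it below -/
import Mathlib

section
/- A linear code C over a finite field GF(q) with generator matrix G satisfies C ∩ C⊥ = {0} if and only if det(G Gᵀ) ≠ 0. -/
open Matrix

/-- The dual code of a linear code `C ⊆ F^n` under the standard bilinear form. -/
def dualCode {F : Type} [Field F] {n : ℕ} (C : Submodule F (Fin n → F)) :
    Submodule F (Fin n → F) where
  carrier := {v | ∀ c ∈ C, v ⬝ᵥ c = 0}
  add_mem' := by
    intro a b ha hb c hc
    simp [add_dotProduct, ha c hc, hb c hc]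
  zero_mem' := by
    intro c hc
    simp
  smul_mem' := by
    intro r a ha c hc
    simp [smul_dotProduct, ha c hc]

lemma aux_vecMul_dot {F : Type} [Field F] {n k : ℕ} (G : Matrix (Fin k) (Fin n) F)
    (x : Fin k → F) (i : Fin k) : (x ᵥ* G) ⬝ᵥ G i = (x ᵥ* (G * Gᵀ)) i := by
  simp only [Matrix.vecMul, dotProduct, Matrix.mul_apply, Matrix.transpose_apply,
    Finset.sum_mul, Finset.mul_sum]
  rw [Finset.sum_comm]
  simp [mul_assoc]

lemma aux_vecMul_sum {F : Type} [Field F] {n k : ℕ} (G : Matrix (Fin k) (Fin n) F)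
    (x : Fin k → F) : ∑ i, x i • G i = x ᵥ* G := by
  ext j
  simp [Matrix.vecMul, dotProduct, Finset.sum_apply]

/-- A linear code `C` over a finite field with generator matrix `G` (rows of `G` are a basis
of `C`) satisfies `C ∩ C^⊥ = {0}` iff `det (G * Gᵀ) ≠ 0`. -/
theorem lcd_iff_det_ne_zero {F : Type} [Field F] [Fintype F] (n k : ℕ)
    (G : Matrix (Fin k) (Fin n) F)
    (hind : LinearIndependent F (fun i : Fin k => G i))
    (C : Submodule F (Fin n → F))
    (hC : C = Submodule.span F (Set.range (fun i : Fin k => G i))) :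
    C ⊓ dualCode C = ⊥ ↔ (G * Gᵀ).det ≠ 0 := by
  subst hC
  constructor
  · intro h hdet
    rw [← Matrix.exists_vecMul_eq_zero_iff] at hdet
    obtain ⟨x, hx, hxM⟩ := hdet
    set v : Fin n → F := x ᵥ* G with hv
    have hvC : v ∈ Submodule.span F (Set.range (fun i : Fin k => G i)) := by
      rw [Submodule.mem_span_range_iff_exists_fun]
      exact ⟨x, aux_vecMul_sum G x⟩
    have hvD : v ∈ dualCode (Submodule.span F (Set.range (fun i : Fin k => G i))) := by
      intro c hc
      induction hc using Submodule.span_induction with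
      | mem c hc =>
        obtain ⟨i, rfl⟩ := hc
        rw [aux_vecMul_dot, hxM]
        rfl
      | zero => simp
      | add a b _ _ ha hb => simp [dotProduct_add, ha, hb]
      | smul r a _ ha => simp [dotProduct_smul, ha]
    have hv0 : v = 0 := by
      have := h ▸ (Submodule.mem_inf.mpr ⟨hvC, hvD⟩)
      simpa using this
    apply hx
    have := linearIndependent_iff'.mp hind Finset.univ x ?_
    · ext i; exact this i (Finset.mem_univ i)
    · rw [aux_vecMul_sum]; exact hv0
  · intro hdet
    rw [eq_bot_iff]
    intro v hv
    rw [Submodule.mem_inf] at hv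
    obtain ⟨hvC, hvD⟩ := hv
    rw [Submodule.mem_span_range_iff_exists_fun] at hvC
    obtain ⟨x, rfl⟩ := hvC
    rw [aux_vecMul_sum] at hvD ⊢
    have hxM : x ᵥ* (G * Gᵀ) = 0 := by
      ext i
      rw [← aux_vecMul_dot]
      exact hvD (G i) (Submodule.subset_span ⟨i, rfl⟩)
    have hx : x = 0 := by
      by_contra hx
      exact hdet (Matrix.exists_vecMul_eq_zero_iff.mp ⟨x, hx, hxM⟩)
    simp [hx]
end

section
/- Let A be a k×k invertible symmetric matrix over GF(2) with k ≥ 3 odd. Then there exists an index i such that the (k−1)×(k−1) principal submatrix obtained by deleting row i and column i of A is invertible. -/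
open Matrix

/-- A symmetric matrix over `GF(2)` of odd size with zero diagonal is singular. -/
lemma det_eq_zero_of_symm_zero_diag_odd {n : ℕ} (hodd : Odd n)
    (B : Matrix (Fin n) (Fin n) (ZMod 2)) (hB : B.IsSymm) (hdiag : ∀ i, B i i = 0) :
    B.det = 0 := by
  rw [Matrix.det_apply]
  refine Finset.sum_ninvolution (fun σ => σ⁻¹) ?_ ?_ (fun _ => Finset.mem_univ _)
    (fun σ => inv_inv σ)
  · intro σ
    have hprod : ∏ i, B (σ⁻¹ i) i = ∏ i, B (σ i) i := by
      rw [← Equiv.prod_comp σ (fun i => B (σ⁻¹ i) i)]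
      refine Finset.prod_congr rfl fun i _ => ?_
      rw [show σ⁻¹ (σ i) = i from σ.symm_apply_apply i]
      exact (Matrix.IsSymm.apply hB i (σ i)).symm
    rw [Equiv.Perm.sign_inv, hprod]
    exact CharTwo.add_self_eq_zero _
  · intro σ hne h
    apply hne
    have hsq : σ ^ 2 = 1 := by
      rw [sq]; nth_rewrite 1 [← h]; exact inv_mul_cancel σ
    -- σ is an involution; on an odd set it must have a fixed point
    by_cases hfix : ∃ i, σ i = i
    · obtain ⟨i, hi⟩ := hfix
      have : ∏ j, B (σ j) j = 0 := by
        apply Finset.prod_eq_zero (Finset.mem_univ i)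
        rw [hi]; exact hdiag i
      simp [this]
    · push_neg at hfix
      have hsupp : σ.support = Finset.univ := by
        ext i; simp [Equiv.Perm.mem_support, hfix i]
      have h2 : 2 ∣ σ.support.card := Equiv.Perm.two_dvd_card_support hsq
      rw [hsupp, Finset.card_univ, Fintype.card_fin] at h2
      exact absurd (hodd.not_two_dvd_nat h2).elim id

/-- A `k × k` invertible symmetric matrix over `GF(2)` with `k ≥ 3` odd has an invertible
`(k−1) × (k−1)` principal submatrix (delete row `i` and column `i` for some `i`). -/
theorem exists_invertible_principal_submatrix_odd (m : ℕ)
    (A : Matrix (Fin (m + 1)) (Fin (m + 1)) (ZMod 2))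
    (hsymm : A.IsSymm) (hdet : A.det ≠ 0)
    (hk : 3 ≤ m + 1) (hodd : Odd (m + 1)) :
    ∃ i : Fin (m + 1),
      (A.submatrix i.succAbove i.succAbove).det ≠ 0 := by
  by_contra hcon
  push_neg at hcon
  -- the adjugate is symmetric with zero diagonal
  have hadj_symm : (Matrix.adjugate A).IsSymm := by
    unfold Matrix.IsSymm
    rw [Matrix.adjugate_transpose, hsymm]
  have hadj_diag : ∀ i, Matrix.adjugate A i i = 0 := by
    intro i
    rw [Matrix.adjugate_fin_succ_eq_det_submatrix, hcon i]
    ring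
  have h0 : (Matrix.adjugate A).det = 0 :=
    det_eq_zero_of_symm_zero_diag_odd hodd _ hadj_symm hadj_diag
  rw [Matrix.det_adjugate] at h0
  exact hdet (pow_eq_zero_iff'.mp h0).1
end

section
/- Let A be a k×k invertible symmetric matrix over GF(2) with k ≥ 4 even. Then there exist distinct indices i, j such that the (k−2)×(k−2) principal submatrix obtained by deleting rows i, j and columns i, j of A is invertible. -/
open Matrix

lemma zmod2_sq : ∀ x : ZMod 2, x * x = x := by decide

lemma zmod2_one_of_ne_zero : ∀ x : ZMod 2, x ≠ 0 → x = 1 := by decide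

lemma key2 {n : ℕ} (hn : 2 ≤ n) (B : Matrix (Fin n) (Fin n) (ZMod 2))
    (hB : B.IsSymm) (hdet : B.det ≠ 0) :
    ∃ p q : Fin n, p ≠ q ∧ B p p * B q q - B p q * B q p ≠ 0 := by
  by_contra h
  push_neg at h
  have hEntry : ∀ p q : Fin n, B p q = B p p * B q q := by
    intro p q
    rcases eq_or_ne p q with rfl | hpq
    · exact (zmod2_sq (B p p)).symm
    · have h0 := h p q hpq
      have hsym : B q p = B p q := by
        have := congrFun (congrFun hB.eq p) q
        simpa [Matrix.transpose_apply] using this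
      rw [hsym, zmod2_sq, sub_eq_zero] at h0
      exact h0.symm
  apply hdet
  by_cases hz : ∃ q : Fin n, B q q = 0
  · obtain ⟨q, hq⟩ := hz
    apply Matrix.det_eq_zero_of_column_eq_zero q
    intro p
    rw [hEntry p q, hq, mul_zero]
  · push_neg at hz
    have h01 : (⟨0, by omega⟩ : Fin n) ≠ ⟨1, by omega⟩ := by
      simp [Fin.ext_iff]
    apply Matrix.det_zero_of_column_eq h01
    intro p
    rw [hEntry p ⟨0, by omega⟩, hEntry p ⟨1, by omega⟩,
      zmod2_one_of_ne_zero _ (hz ⟨0, by omega⟩), zmod2_one_of_ne_zero _ (hz ⟨1, by omega⟩)]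

/-- A `k × k` invertible symmetric matrix over `GF(2)` with `k ≥ 4` even has an invertible
`(k−2) × (k−2)` principal submatrix (delete rows and columns indexed by two distinct
indices `i` and `i.succAbove j`). -/
theorem exists_invertible_principal_submatrix_even (m : ℕ)
    (A : Matrix (Fin (m + 2)) (Fin (m + 2)) (ZMod 2))
    (hsymm : A.IsSymm) (hdet : A.det ≠ 0)
    (hk : 4 ≤ m + 2) (heven : Even (m + 2)) :
    ∃ (i : Fin (m + 2)) (j : Fin (m + 1)),
      (A.submatrix (i.succAbove ∘ j.succAbove) (i.succAbove ∘ j.succAbove)).det ≠ 0 := by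
  classical
  have hunit : IsUnit A.det := isUnit_iff_ne_zero.mpr hdet
  set B := A⁻¹ with hBdef
  have hBsymm : B.IsSymm := by
    unfold Matrix.IsSymm
    rw [hBdef, Matrix.transpose_nonsing_inv, hsymm.eq]
  have hBdet : B.det ≠ 0 := by
    intro h0
    have := Matrix.det_nonsing_inv_mul_det (A := A) hunit
    rw [← hBdef, h0, zero_mul] at this
    exact one_ne_zero this.symm
  obtain ⟨p, q, hpq, hval⟩ := key2 (by omega) B hBsymm hBdet
  obtain ⟨j, hj⟩ := Fin.exists_succAbove_eq (Ne.symm hpq)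
  refine ⟨p, j, ?_⟩
  set f : Fin m → Fin (m + 2) := p.succAbove ∘ j.succAbove with hf
  set g : Fin m ⊕ Fin 2 → Fin (m + 2) := Sum.elim f ![p, q] with hg
  have hfp : ∀ a, f a ≠ p := fun a => Fin.succAbove_ne p _
  have hfq : ∀ a, f a ≠ q := by
    intro a hq'
    rw [← hj] at hq'
    exact Fin.succAbove_ne j a (Fin.succAbove_right_injective hq')
  have hgr : ∀ b : Fin 2, g (Sum.inr b) = p ∨ g (Sum.inr b) = q := by
    intro b
    fin_cases b
    · left; rfl
    · right; rfl
  have hginj : Function.Injective g := by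
    rintro (a | a) (b | b) hab
    · simp only [hg, Sum.elim_inl, hf, Function.comp] at hab
      exact congrArg Sum.inl (Fin.succAbove_right_injective
        (Fin.succAbove_right_injective hab))
    · exfalso
      rcases hgr b with h' | h' <;> rw [show g (Sum.inl a) = f a from rfl, h'] at hab
      · exact hfp a hab
      · exact hfq a hab
    · exfalso
      rcases hgr a with h' | h' <;> rw [show g (Sum.inl b) = f b from rfl, h'] at hab
      · exact hfp b hab.symm
      · exact hfq b hab.symm
    · congr 1
      fin_cases a <;> fin_cases b <;> simp_all [hg]
  have hgbij : Function.Bijective g :=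
    (Fintype.bijective_iff_injective_and_card g).mpr ⟨hginj, by simp⟩
  set e : Fin m ⊕ Fin 2 ≃ Fin (m + 2) := Equiv.ofBijective g hgbij with he
  have hecoe : ∀ x, e x = g x := fun x => rfl
  set C : Matrix (Fin m ⊕ Fin 2) (Fin m ⊕ Fin 2) (ZMod 2) := A.submatrix e e with hC
  set D : Matrix (Fin m ⊕ Fin 2) (Fin m ⊕ Fin 2) (ZMod 2) := B.submatrix e e with hD
  have hCD : C * D = 1 := by
    rw [hC, hD, Matrix.submatrix_mul_equiv, hBdef, Matrix.mul_nonsing_inv _ hunit,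
      Matrix.submatrix_one_equiv]
  have hC' := Matrix.fromBlocks_toBlocks C
  have hD' := Matrix.fromBlocks_toBlocks D
  have h12 : C.toBlocks₁₁ * D.toBlocks₁₂ + C.toBlocks₁₂ * D.toBlocks₂₂ = 0 := by
    have := congrArg Matrix.toBlocks₁₂ hCD
    rw [← hC', ← hD', Matrix.fromBlocks_multiply, ← Matrix.fromBlocks_one,
      Matrix.toBlocks_fromBlocks₁₂, Matrix.toBlocks_fromBlocks₁₂] at this
    exact this
  have h22 : C.toBlocks₂₁ * D.toBlocks₁₂ + C.toBlocks₂₂ * D.toBlocks₂₂ = 1 := by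
    have := congrArg Matrix.toBlocks₂₂ hCD
    rw [← hC', ← hD', Matrix.fromBlocks_multiply, ← Matrix.fromBlocks_one,
      Matrix.toBlocks_fromBlocks₂₂, Matrix.toBlocks_fromBlocks₂₂] at this
    exact this
  have hkey : C * Matrix.fromBlocks 1 D.toBlocks₁₂ 0 D.toBlocks₂₂ =
      Matrix.fromBlocks C.toBlocks₁₁ 0 C.toBlocks₂₁ 1 := by
    nth_rewrite 1 [← hC']
    rw [Matrix.fromBlocks_multiply]
    simp [h12, h22]
  have hdets : C.det * D.toBlocks₂₂.det = C.toBlocks₁₁.det := by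
    have := congrArg Matrix.det hkey
    rw [Matrix.det_mul, Matrix.det_fromBlocks_zero₂₁, Matrix.det_fromBlocks_zero₁₂] at this
    simpa using this
  have hCdet : C.det = A.det := Matrix.det_submatrix_equiv_self e A
  have hD22 : D.toBlocks₂₂.det = B p p * B q q - B p q * B q p := by
    rw [Matrix.det_fin_two]
    simp [Matrix.toBlocks₂₂, hD, hecoe, hg]
  have hC11 : C.toBlocks₁₁ = A.submatrix f f := by
    ext a b
    simp [Matrix.toBlocks₁₁, hC, hecoe, hg]
  rw [← hC11, ← hdets, hCdet, hD22]
  exact mul_ne_zero hdet hval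
end
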